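/- Let E ⊂ (−π, π) be a compact set satisfying the interval condition at a ∈ E with parameter ρ > 0, let 0 < ρ_0 ≤ ρ/2 be such that [a−2ρ_0, a+2ρ_0] ⊂ (−π, π), and let k be a positive integer. Then there exist β ∈ (0, 1) and C > 0 such that for all sufficiently large n and every trigonometric polynomial T_n of degree at most n there exists a trigonometric polynomial V_n of degree at most n + √n with the following properties: (i) ‖V_n‖_E ≤ ‖T_n‖_E; (ii) |V_n(t) − T_n(t)| ≤ C β^{√n} ‖T_n‖_E for all t ∈ [a−ρ_0, a]; (iii) |V_n(t)| ≤ C β^{√n} ‖T_n‖_E for all t ∈ E \ [a−2ρ_0, a]; (iv) V_n^{(j)}(a) = T_n^{(j)}(a) for j = 0, 1, …, k. -/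

import Mathlib

open scoped Real

/-- A real trigonometric polynomial of degree at most `n`. -/
def IsTrigPoly (n : ℕ) (T : ℝ → ℝ) : Prop :=
  ∃ A B : ℕ → ℝ,
    T = fun t => ∑ j ∈ Finset.range (n + 1),
      (A j * Real.cos (j * t) + B j * Real.sin (j * t))


/-- Sup-norm of a function over a set. -/
noncomputable def supNormR (f : ℝ → ℝ) (X : Set ℝ) : ℝ := ⨆ x ∈ X, |f x|

/-- `E` satisfies the interval condition at `a` with parameter `ρ`:
`[a-2ρ, a] ⊆ E` and `(a, a+2ρ) ∩ E = ∅`. -/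
def IntervalCondition (E : Set ℝ) (a ρ : ℝ) : Prop :=
  Set.Icc (a - 2 * ρ) a ⊆ E ∧ Set.Ioo a (a + 2 * ρ) ∩ E = ∅

namespace Stmt7Aux

lemma tp_congr {n : ℕ} {f g : ℝ → ℝ} (h : ∀ t, f t = g t) (hf : IsTrigPoly n f) :
    IsTrigPoly n g := by
  obtain ⟨A, B, hA⟩ := hf
  exact ⟨A, B, by funext t; rw [← h t, hA]⟩

lemma tp_add {n : ℕ} {f g : ℝ → ℝ} (hf : IsTrigPoly n f) (hg : IsTrigPoly n g) :
    IsTrigPoly n (fun t => f t + g t) := by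
  obtain ⟨A, B, hA⟩ := hf
  obtain ⟨A', B', hA'⟩ := hg
  refine ⟨fun j => A j + A' j, fun j => B j + B' j, ?_⟩
  funext t
  simp only [hA, hA']
  rw [← Finset.sum_add_distrib]
  exact Finset.sum_congr rfl fun j _ => by ring

lemma tp_smul {n : ℕ} (c : ℝ) {f : ℝ → ℝ} (hf : IsTrigPoly n f) :
    IsTrigPoly n (fun t => c * f t) := by
  obtain ⟨A, B, hA⟩ := hf
  refine ⟨fun j => c * A j, fun j => c * B j, ?_⟩
  funext t
  simp only [hA]
  rw [Finset.mul_sum]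
  exact Finset.sum_congr rfl fun j _ => by ring

lemma tp_single {n : ℕ} (j : ℕ) (hj : j ≤ n) (ca sa : ℝ) :
    IsTrigPoly n (fun t => ca * Real.cos (j * t) + sa * Real.sin (j * t)) := by
  refine ⟨fun i => if i = j then ca else 0, fun i => if i = j then sa else 0, ?_⟩
  funext t
  symm
  rw [Finset.sum_eq_single j]
  · simp
  · intro b _ hb; simp [hb]
  · intro hj'; exact absurd (Finset.mem_range.2 (Nat.lt_succ_of_le hj)) hj'

lemma tp_const (n : ℕ) (c : ℝ) : IsTrigPoly n (fun _ => c) := by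
  have h := tp_single (n := n) 0 (Nat.zero_le n) c 0
  exact tp_congr (fun t => by simp) h

lemma tp_mono {n m : ℕ} (hnm : n ≤ m) {f : ℝ → ℝ} (hf : IsTrigPoly n f) : IsTrigPoly m f := by
  obtain ⟨A, B, hA⟩ := hf
  refine ⟨fun j => if j ≤ n then A j else 0, fun j => if j ≤ n then B j else 0, ?_⟩
  funext t
  simp only [hA]
  refine (Finset.sum_congr rfl fun j hj => ?_).trans
    (Finset.sum_subset (Finset.range_subset_range.2 (by omega)) ?_)
  · have hjn : j ≤ n := Nat.lt_succ_iff.mp (Finset.mem_range.1 hj)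
    simp [hjn]
  · intro x _ hx'
    have : ¬ x ≤ n := fun h => hx' (Finset.mem_range.2 (Nat.lt_succ_of_le h))
    simp [this]

lemma tp_sum {ι : Type*} {n : ℕ} (s : Finset ι) (F : ι → ℝ → ℝ)
    (h : ∀ i ∈ s, IsTrigPoly n (F i)) : IsTrigPoly n (fun t => ∑ i ∈ s, F i t) := by
  classical
  induction s using Finset.induction_on with
  | empty => exact tp_congr (fun t => by simp) (tp_const n 0)
  | @insert x s hx ih =>
    have h1 := tp_add (h x (Finset.mem_insert_self x s))
      (ih fun i hi => h i (Finset.mem_insert_of_mem hi))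
    refine tp_congr (fun t => ?_) h1
    rw [Finset.sum_insert hx]

lemma cos_mul_cos_succ (j : ℕ) (t : ℝ) :
    Real.cos t * Real.cos ((↑(j+1) : ℝ) * t)
      = (1/2) * Real.cos ((↑(j+2) : ℝ) * t) + (1/2) * Real.cos ((j : ℝ) * t) := by
  push_cast
  rw [show ((j:ℝ)+2) * t = ((j:ℝ)+1)*t + t by ring,
      show (j:ℝ) * t = ((j:ℝ)+1)*t - t by ring, Real.cos_add, Real.cos_sub]
  ring

lemma cos_mul_sin_succ (j : ℕ) (t : ℝ) :
    Real.cos t * Real.sin ((↑(j+1) : ℝ) * t)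
      = (1/2) * Real.sin ((↑(j+2) : ℝ) * t) + (1/2) * Real.sin ((j : ℝ) * t) := by
  push_cast
  rw [show ((j:ℝ)+2) * t = ((j:ℝ)+1)*t + t by ring,
      show (j:ℝ) * t = ((j:ℝ)+1)*t - t by ring, Real.sin_add, Real.sin_sub]
  ring

lemma sin_mul_cos_succ (j : ℕ) (t : ℝ) :
    Real.sin t * Real.cos ((↑(j+1) : ℝ) * t)
      = (1/2) * Real.sin ((↑(j+2) : ℝ) * t) + (-(1/2)) * Real.sin ((j : ℝ) * t) := by
  push_cast
  rw [show ((j:ℝ)+2) * t = ((j:ℝ)+1)*t + t by ring,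
      show (j:ℝ) * t = ((j:ℝ)+1)*t - t by ring, Real.sin_add, Real.sin_sub]
  ring

lemma sin_mul_sin_succ (j : ℕ) (t : ℝ) :
    Real.sin t * Real.sin ((↑(j+1) : ℝ) * t)
      = (-(1/2)) * Real.cos ((↑(j+2) : ℝ) * t) + (1/2) * Real.cos ((j : ℝ) * t) := by
  push_cast
  rw [show ((j:ℝ)+2) * t = ((j:ℝ)+1)*t + t by ring,
      show (j:ℝ) * t = ((j:ℝ)+1)*t - t by ring, Real.cos_add, Real.cos_sub]
  ring

lemma tp_cc (j : ℕ) : IsTrigPoly (j+2) (fun t => Real.cos t * Real.cos ((↑(j+1) : ℝ) * t)) := by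
  have h := tp_add (tp_single (n := j+2) (j+2) le_rfl (1/2) 0)
                   (tp_single (n := j+2) j (by omega) (1/2) 0)
  refine tp_congr (fun t => ?_) h
  have hid := cos_mul_cos_succ j t
  push_cast at hid ⊢
  linarith [hid]

lemma tp_cs (j : ℕ) : IsTrigPoly (j+2) (fun t => Real.cos t * Real.sin ((↑(j+1) : ℝ) * t)) := by
  have h := tp_add (tp_single (n := j+2) (j+2) le_rfl 0 (1/2))
                   (tp_single (n := j+2) j (by omega) 0 (1/2))
  refine tp_congr (fun t => ?_) h
  have hid := cos_mul_sin_succ j t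
  push_cast at hid ⊢
  linarith [hid]

lemma tp_sc (j : ℕ) : IsTrigPoly (j+2) (fun t => Real.sin t * Real.cos ((↑(j+1) : ℝ) * t)) := by
  have h := tp_add (tp_single (n := j+2) (j+2) le_rfl 0 (1/2))
                   (tp_single (n := j+2) j (by omega) 0 (-(1/2)))
  refine tp_congr (fun t => ?_) h
  have hid := sin_mul_cos_succ j t
  push_cast at hid ⊢
  linarith [hid]

lemma tp_ss (j : ℕ) : IsTrigPoly (j+2) (fun t => Real.sin t * Real.sin ((↑(j+1) : ℝ) * t)) := by
  have h := tp_add (tp_single (n := j+2) (j+2) le_rfl (-(1/2)) 0)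
                   (tp_single (n := j+2) j (by omega) (1/2) 0)
  refine tp_congr (fun t => ?_) h
  have hid := sin_mul_sin_succ j t
  push_cast at hid ⊢
  linarith [hid]

lemma tp_cos_mul : ∀ (n : ℕ) (f : ℝ → ℝ), IsTrigPoly n f →
    IsTrigPoly (n+1) (fun t => Real.cos t * f t) := by
  intro n
  induction n with
  | zero =>
    intro f hf
    obtain ⟨A, B, hA⟩ := hf
    have h1 := tp_single (n := 1) 1 le_rfl (A 0) 0
    refine tp_congr (fun t => ?_) h1
    simp only [hA]
    simp [Finset.sum_range_one]
    ring
  | succ n IH =>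
    intro f hf
    obtain ⟨A, B, hA⟩ := hf
    have hgtp : IsTrigPoly n (fun t => ∑ j ∈ Finset.range (n+1),
        (A j * Real.cos (j*t) + B j * Real.sin (j*t))) := ⟨A, B, rfl⟩
    have h3 := tp_mono (by omega : n + 1 ≤ n + 2) (IH _ hgtp)
    have h4 := tp_smul (A (n+1)) (tp_cc n)
    have h5 := tp_smul (B (n+1)) (tp_cs n)
    have h6 := tp_add (tp_add h3 h4) h5
    refine tp_congr (fun t => ?_) h6
    simp only [hA]
    conv_rhs => rw [Finset.sum_range_succ]
    ring

lemma tp_sin_mul : ∀ (n : ℕ) (f : ℝ → ℝ), IsTrigPoly n f →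
    IsTrigPoly (n+1) (fun t => Real.sin t * f t) := by
  intro n
  induction n with
  | zero =>
    intro f hf
    obtain ⟨A, B, hA⟩ := hf
    have h1 := tp_single (n := 1) 1 le_rfl 0 (A 0)
    refine tp_congr (fun t => ?_) h1
    simp only [hA]
    simp [Finset.sum_range_one]
    ring
  | succ n IH =>
    intro f hf
    obtain ⟨A, B, hA⟩ := hf
    have hgtp : IsTrigPoly n (fun t => ∑ j ∈ Finset.range (n+1),
        (A j * Real.cos (j*t) + B j * Real.sin (j*t))) := ⟨A, B, rfl⟩
    have h3 := tp_mono (by omega : n + 1 ≤ n + 2) (IH _ hgtp)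
    have h4 := tp_smul (A (n+1)) (tp_sc n)
    have h5 := tp_smul (B (n+1)) (tp_ss n)
    have h6 := tp_add (tp_add h3 h4) h5
    refine tp_congr (fun t => ?_) h6
    simp only [hA]
    conv_rhs => rw [Finset.sum_range_succ]
    ring

lemma tp_cos_shift_mul (a : ℝ) {n : ℕ} {f : ℝ → ℝ} (hf : IsTrigPoly n f) :
    IsTrigPoly (n+1) (fun t => Real.cos (t - a) * f t) := by
  have h1 := tp_smul (Real.cos a) (tp_cos_mul n f hf)
  have h2 := tp_smul (Real.sin a) (tp_sin_mul n f hf)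
  refine tp_congr (fun t => ?_) (tp_add h1 h2)
  rw [Real.cos_sub]
  ring

lemma sin_half_sq (x : ℝ) : Real.sin (x/2)^2 = (1 - Real.cos x)/2 := by
  have h := Real.sin_sq_eq_half_sub (x/2)
  rw [show 2*(x/2) = x by ring] at h
  rw [h]; ring

lemma cos_half_sq (x : ℝ) : Real.cos (x/2)^2 = (1 + Real.cos x)/2 := by
  have h := Real.cos_sq (x/2)
  rw [show 2*(x/2) = x by ring] at h
  rw [h]; ring

lemma tp_d_mul (a : ℝ) {n : ℕ} {f : ℝ → ℝ} (hf : IsTrigPoly n f) :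
    IsTrigPoly (n+1) (fun t => Real.sin ((t - a)/2)^2 * f t) := by
  have h1 := tp_smul (1/2) (tp_mono (Nat.le_succ n) hf)
  have h2 := tp_smul (-(1/2)) (tp_cos_shift_mul a hf)
  refine tp_congr (fun t => ?_) (tp_add h1 h2)
  rw [sin_half_sq]
  ring

lemma tp_e_mul (a : ℝ) {n : ℕ} {f : ℝ → ℝ} (hf : IsTrigPoly n f) :
    IsTrigPoly (n+1) (fun t => Real.cos ((t - a)/2)^2 * f t) := by
  have h1 := tp_smul (1/2) (tp_mono (Nat.le_succ n) hf)
  have h2 := tp_smul (1/2) (tp_cos_shift_mul a hf)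
  refine tp_congr (fun t => ?_) (tp_add h1 h2)
  rw [cos_half_sq]
  ring

lemma tp_d_pow_mul (a : ℝ) {n : ℕ} {f : ℝ → ℝ} (hf : IsTrigPoly n f) :
    ∀ i, IsTrigPoly (n+i) (fun t => (Real.sin ((t - a)/2)^2)^i * f t) := by
  intro i
  induction i with
  | zero => exact tp_congr (fun t => by simp) hf
  | succ i ih =>
    have h := tp_d_mul a ih
    refine tp_congr (fun t => ?_) h
    ring

lemma tp_e_pow_mul (a : ℝ) {n : ℕ} {f : ℝ → ℝ} (hf : IsTrigPoly n f) :
    ∀ i, IsTrigPoly (n+i) (fun t => (Real.cos ((t - a)/2)^2)^i * f t) := by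
  intro i
  induction i with
  | zero => exact tp_congr (fun t => by simp) hf
  | succ i ih =>
    have h := tp_e_mul a ih
    refine tp_congr (fun t => ?_) h
    ring

lemma tp_term (a : ℝ) {n : ℕ} {f : ℝ → ℝ} (hf : IsTrigPoly n f) (N j : ℕ) (hj : j ≤ N) (c : ℝ) :
    IsTrigPoly (n + N)
      (fun t => c * ((Real.sin ((t-a)/2)^2)^j * ((Real.cos ((t-a)/2)^2)^(N-j) * f t))) := by
  have h1 := tp_e_pow_mul a hf (N - j)
  have h2 := tp_d_pow_mul a h1 j
  have h3 := tp_smul c h2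
  have he : n + (N - j) + j = n + N := by omega
  rw [he] at h3
  exact h3

lemma supNormR_nonneg (f : ℝ → ℝ) (X : Set ℝ) : 0 ≤ supNormR f X := by
  apply Real.iSup_nonneg
  intro x
  exact Real.iSup_nonneg fun _ => abs_nonneg _

lemma le_supNormR {f : ℝ → ℝ} (hf : Continuous f) {X : Set ℝ} (hX : IsCompact X)
    {x : ℝ} (hx : x ∈ X) : |f x| ≤ supNormR f X := by
  obtain ⟨Cb, hCb⟩ : ∃ Cb, ∀ y ∈ X, |f y| ≤ Cb := by
    obtain ⟨z, hz, hzmax⟩ := hX.exists_isMaxOn ⟨x, hx⟩ (hf.abs.continuousOn)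
    exact ⟨|f z|, hzmax⟩
  have hb : BddAbove (Set.range fun y => ⨆ _ : y ∈ X, |f y|) := by
    refine ⟨max Cb 0, ?_⟩
    rintro v ⟨y, rfl⟩
    show (⨆ _ : y ∈ X, |f y|) ≤ max Cb 0
    by_cases hy : y ∈ X
    · rw [ciSup_pos (f := fun _ => |f y|) hy]; exact le_max_of_le_left (hCb y hy)
    · haveI : IsEmpty (y ∈ X) := ⟨hy⟩
      rw [Real.iSup_of_isEmpty]
      exact le_max_right _ _
  calc |f x| = ⨆ _ : x ∈ X, |f x| := (ciSup_pos (f := fun _ => |f x|) hx).symm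
    _ ≤ supNormR f X := le_ciSup hb x

lemma supNormR_le {f g : ℝ → ℝ} {X : Set ℝ} (h : ∀ x ∈ X, |g x| ≤ supNormR f X)
    (h0 : 0 ≤ supNormR f X) : supNormR g X ≤ supNormR f X := by
  apply Real.iSup_le _ h0
  intro x
  exact Real.iSup_le (fun hx => h x hx) h0



lemma tp_contDiff {n : ℕ} {T : ℝ → ℝ} (hT : IsTrigPoly n T) : ContDiff ℝ (⊤:ℕ∞) T := by
  obtain ⟨A, B, hA⟩ := hT
  rw [hA]
  apply ContDiff.sum
  intro j _
  apply ContDiff.add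
  · exact contDiff_const.mul (Real.contDiff_cos.comp (contDiff_const.mul contDiff_id))
  · exact contDiff_const.mul (Real.contDiff_sin.comp (contDiff_const.mul contDiff_id))

lemma iteratedDeriv_sub' : ∀ (j : ℕ) (f g : ℝ → ℝ), ContDiff ℝ (⊤:ℕ∞) f → ContDiff ℝ (⊤:ℕ∞) g →
    iteratedDeriv j (fun t => f t - g t) = fun x => iteratedDeriv j f x - iteratedDeriv j g x := by
  intro j
  induction j with
  | zero => intro f g _ _; simp [iteratedDeriv_zero]
  | succ j IH =>
    intro f g hf hg
    rw [iteratedDeriv_succ', iteratedDeriv_succ', iteratedDeriv_succ']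
    have hd : deriv (fun t => f t - g t) = fun t => deriv f t - deriv g t := by
      funext x
      exact deriv_fun_sub ((hf.differentiable (by simp)).differentiableAt)
        ((hg.differentiable (by simp)).differentiableAt)
    rw [hd, IH _ _ ((contDiff_infty_iff_deriv.mp hf).2) ((contDiff_infty_iff_deriv.mp hg).2)]

lemma contDiff_sin_shift (a : ℝ) : ContDiff ℝ (⊤:ℕ∞) (fun t => Real.sin ((t - a)/2)) :=
  Real.contDiff_sin.comp ((contDiff_id.sub contDiff_const).div_const 2)

lemma contDiff_cos_shift (a : ℝ) : ContDiff ℝ (⊤:ℕ∞) (fun t => Real.cos ((t - a)/2)) :=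
  Real.contDiff_cos.comp ((contDiff_id.sub contDiff_const).div_const 2)

lemma van (a : ℝ) : ∀ (i r : ℕ) (h : ℝ → ℝ), ContDiff ℝ (⊤:ℕ∞) h → i < r →
    iteratedDeriv i (fun t => Real.sin ((t-a)/2) ^ r * h t) a = 0 := by
  intro i
  induction i with
  | zero =>
    intro r h _ hr
    rw [iteratedDeriv_zero]
    simp [zero_pow (by omega : r ≠ 0)]
  | succ i IH =>
    intro r h hh hr
    obtain ⟨r', rfl⟩ : ∃ r', r = r' + 1 := ⟨r - 1, by omega⟩
    rw [iteratedDeriv_succ']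
    have hd : deriv (fun t => Real.sin ((t-a)/2) ^ (r'+1) * h t)
        = fun t => Real.sin ((t-a)/2) ^ r' *
            (((r':ℝ)+1) * (Real.cos ((t-a)/2) * (1/2)) * h t
              + Real.sin ((t-a)/2) * deriv h t) := by
      funext t
      have h1 : HasDerivAt (fun s : ℝ => (s - a)/2) (1/2) t := by
        simpa using ((hasDerivAt_id t).sub_const a).div_const 2
      have hu : HasDerivAt (fun s => Real.sin ((s-a)/2)) (Real.cos ((t-a)/2) * (1/2)) t :=
        by have := (Real.hasDerivAt_sin ((t-a)/2)).comp t h1; exact this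
      have hp := hu.pow (r'+1)
      have hht : HasDerivAt h (deriv h t) t :=
        ((hh.differentiable (by simp)) t).hasDerivAt
      rw [show deriv (fun t => Real.sin ((t - a) / 2) ^ (r' + 1) * h t) t = _ from (hp.mul hht).deriv]
      simp only [Nat.add_sub_cancel, Pi.pow_apply]
      push_cast
      ring
    rw [hd]
    refine IH r' _ ?_ (by omega)
    have hds : ContDiff ℝ (⊤:ℕ∞) (deriv h) := (contDiff_infty_iff_deriv.mp hh).2
    exact ((contDiff_const.mul ((contDiff_cos_shift a).mul contDiff_const)).mul hh).add
      ((contDiff_sin_shift a).mul hds)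

lemma binom_sum_eq (x : ℝ) (N : ℕ) :
    ∑ j ∈ Finset.range (N+1), (N.choose j : ℝ) * x^j * (1-x)^(N-j) = 1 := by
  have h := add_pow x (1-x) N
  rw [show x + (1-x) = 1 by ring, one_pow] at h
  calc ∑ j ∈ Finset.range (N+1), (N.choose j : ℝ) * x^j * (1-x)^(N-j)
      = ∑ j ∈ Finset.range (N+1), x^j * (1-x)^(N-j) * (N.choose j:ℝ) :=
        Finset.sum_congr rfl fun j _ => by ring
    _ = 1 := h.symm

lemma tail_bound (x z : ℝ) (hx0 : 0 ≤ x) (hx1 : x ≤ 1) (hz : 1 ≤ z) (s N : ℕ) :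
    ∑ j ∈ Finset.Icc s N, (N.choose j : ℝ) * x^j * (1-x)^(N-j) ≤ (1 - x + x*z)^N / z^s := by
  have hz0 : 0 < z := lt_of_lt_of_le one_pos hz
  have hx1' : 0 ≤ 1 - x := by linarith
  rw [le_div_iff₀ (pow_pos hz0 s)]
  have step1 : (∑ j ∈ Finset.Icc s N, (N.choose j:ℝ) * x^j * (1-x)^(N-j)) * z^s
      ≤ ∑ j ∈ Finset.Icc s N, (N.choose j:ℝ) * (x*z)^j * (1-x)^(N-j) := by
    rw [Finset.sum_mul]
    apply Finset.sum_le_sum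
    intro j hj
    obtain ⟨hj1, _⟩ := Finset.mem_Icc.mp hj
    have hzz : z^s ≤ z^j := pow_le_pow_right₀ hz hj1
    calc (N.choose j:ℝ) * x^j * (1-x)^(N-j) * z^s
        ≤ (N.choose j:ℝ) * x^j * (1-x)^(N-j) * z^j := by
          apply mul_le_mul_of_nonneg_left hzz
          positivity
      _ = (N.choose j:ℝ) * (x*z)^j * (1-x)^(N-j) := by rw [mul_pow]; ring
  have step2 : ∑ j ∈ Finset.Icc s N, (N.choose j:ℝ) * (x*z)^j * (1-x)^(N-j)
      ≤ ∑ j ∈ Finset.range (N+1), (N.choose j:ℝ) * (x*z)^j * (1-x)^(N-j) := by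
    apply Finset.sum_le_sum_of_subset_of_nonneg
    · intro j hj
      exact Finset.mem_range.2 (Nat.lt_succ_of_le (Finset.mem_Icc.mp hj).2)
    · intro j _ _
      positivity
  have step3 : ∑ j ∈ Finset.range (N+1), (N.choose j:ℝ) * (x*z)^j * (1-x)^(N-j)
      = (1 - x + x*z)^N := by
    have h := add_pow (x*z) (1-x) N
    rw [show x*z + (1-x) = 1 - x + x*z by ring] at h
    rw [h]
    exact Finset.sum_congr rfl fun j _ => by ring
  linarith

lemma head_bound (x w : ℝ) (hx0 : 0 ≤ x) (hx1 : x ≤ 1) (hw0 : 0 < w) (hw1 : w ≤ 1)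
    (s N : ℕ) (hsN : s ≤ N + 1) :
    ∑ j ∈ Finset.range s, (N.choose j : ℝ) * x^j * (1-x)^(N-j) ≤ (1 - x + x*w)^N / w^s := by
  have hx1' : 0 ≤ 1 - x := by linarith
  rw [le_div_iff₀ (pow_pos hw0 s)]
  have step1 : (∑ j ∈ Finset.range s, (N.choose j:ℝ) * x^j * (1-x)^(N-j)) * w^s
      ≤ ∑ j ∈ Finset.range s, (N.choose j:ℝ) * (x*w)^j * (1-x)^(N-j) := by
    rw [Finset.sum_mul]
    apply Finset.sum_le_sum
    intro j hj
    have hj1 : j ≤ s := le_of_lt (Finset.mem_range.mp hj)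
    have hww : w^s ≤ w^j := pow_le_pow_of_le_one hw0.le hw1 hj1
    calc (N.choose j:ℝ) * x^j * (1-x)^(N-j) * w^s
        ≤ (N.choose j:ℝ) * x^j * (1-x)^(N-j) * w^j := by
          apply mul_le_mul_of_nonneg_left hww
          positivity
      _ = (N.choose j:ℝ) * (x*w)^j * (1-x)^(N-j) := by rw [mul_pow]; ring
  have step2 : ∑ j ∈ Finset.range s, (N.choose j:ℝ) * (x*w)^j * (1-x)^(N-j)
      ≤ ∑ j ∈ Finset.range (N+1), (N.choose j:ℝ) * (x*w)^j * (1-x)^(N-j) := by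
    apply Finset.sum_le_sum_of_subset_of_nonneg
    · exact Finset.range_subset_range.2 hsN
    · intro j _ _
      positivity
  have step3 : ∑ j ∈ Finset.range (N+1), (N.choose j:ℝ) * (x*w)^j * (1-x)^(N-j)
      = (1 - x + x*w)^N := by
    have h := add_pow (x*w) (1-x) N
    rw [show x*w + (1-x) = 1 - x + x*w by ring] at h
    rw [h]
    exact Finset.sum_congr rfl fun j _ => by ring
  linarith

lemma exists_zeta {D : ℝ} {P Q : ℕ} (hD0 : 0 < D) (h : D * Q < P) :
    ∃ z : ℝ, 1 < z ∧ (1 - D + D*z)^Q < z^P := by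
  set f : ℝ → ℝ := fun z => z^P - (1 - D + D*z)^Q with hfdef
  have hf1 : f 1 = 0 := by
    simp only [hfdef]
    rw [show 1 - D + D*(1:ℝ) = 1 by ring]
    simp
  have hder : HasDerivAt f ((P:ℝ) - Q * D) 1 := by
    have h1 : HasDerivAt (fun z : ℝ => z^P) ((P:ℝ) * (1:ℝ)^(P-1)) 1 := hasDerivAt_pow P 1
    have h2 : HasDerivAt (fun z : ℝ => 1 - D + D*z) D 1 := by
      simpa using ((hasDerivAt_id (1:ℝ)).const_mul D).const_add (1 - D)
    have h3 := h2.pow Q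
    rw [show 1 - D + D*(1:ℝ) = 1 by ring] at h3
    have h4 := h1.sub h3
    simpa using (show HasDerivAt f _ 1 from h4)
  have hpos : (0:ℝ) < (P:ℝ) - Q * D := by
    have : D * Q < P := h
    linarith [this]
  have hslope := hasDerivAt_iff_tendsto_slope.mp hder
  have hev : ∀ᶠ z in nhdsWithin (1:ℝ) {(1:ℝ)}ᶜ, 0 < slope f 1 z :=
    hslope.eventually (lt_mem_nhds hpos)
  have hev2 : ∀ᶠ z in nhdsWithin (1:ℝ) (Set.Ioi 1), 0 < slope f 1 z :=
    hev.filter_mono (nhdsWithin_mono 1 (fun x hx => ne_of_gt hx))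
  obtain ⟨z, hsl, hmem⟩ := (hev2.and eventually_mem_nhdsWithin).exists
  refine ⟨z, hmem, ?_⟩
  have hz1 : (0:ℝ) < z - 1 := sub_pos.mpr hmem
  have : 0 < (f z - f 1)/(z - 1) := by rwa [slope_def_field] at hsl
  have hfz : 0 < f z := by
    have := mul_pos this hz1
    rw [div_mul_cancel₀ _ (ne_of_gt hz1)] at this
    linarith [hf1, this]
  simpa [hfdef, sub_pos] using hfz

lemma exists_omega {D : ℝ} {P Q : ℕ} (hD0 : 0 < D) (h : (P:ℝ) < D * Q) :
    ∃ w : ℝ, 0 < w ∧ w < 1 ∧ (1 - D + D*w)^Q < w^P := by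
  set f : ℝ → ℝ := fun z => z^P - (1 - D + D*z)^Q with hfdef
  have hf1 : f 1 = 0 := by
    simp only [hfdef]
    rw [show 1 - D + D*(1:ℝ) = 1 by ring]
    simp
  have hder : HasDerivAt f ((P:ℝ) - Q * D) 1 := by
    have h1 : HasDerivAt (fun z : ℝ => z^P) ((P:ℝ) * (1:ℝ)^(P-1)) 1 := hasDerivAt_pow P 1
    have h2 : HasDerivAt (fun z : ℝ => 1 - D + D*z) D 1 := by
      simpa using ((hasDerivAt_id (1:ℝ)).const_mul D).const_add (1 - D)
    have h3 := h2.pow Q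
    rw [show 1 - D + D*(1:ℝ) = 1 by ring] at h3
    have h4 := h1.sub h3
    simpa using (show HasDerivAt f _ 1 from h4)
  have hneg : (P:ℝ) - Q * D < 0 := by linarith [h]
  have hslope := hasDerivAt_iff_tendsto_slope.mp hder
  have hev : ∀ᶠ z in nhdsWithin (1:ℝ) {(1:ℝ)}ᶜ, slope f 1 z < 0 :=
    hslope.eventually (gt_mem_nhds hneg)
  have hev2 : ∀ᶠ z in nhdsWithin (1:ℝ) (Set.Iio 1), slope f 1 z < 0 :=
    hev.filter_mono (nhdsWithin_mono 1 (fun x hx => ne_of_lt hx))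
  have hev3 : ∀ᶠ z in nhdsWithin (1:ℝ) (Set.Iio 1), z ∈ Set.Ioo (0:ℝ) 1 :=
    Filter.eventually_of_mem (Ioo_mem_nhdsLT_of_mem (by norm_num : (1:ℝ) ∈ Set.Ioc (0:ℝ) 1))
      (fun x hx => hx)
  obtain ⟨w, hsl, hmem⟩ := (hev2.and hev3).exists
  refine ⟨w, hmem.1, hmem.2, ?_⟩
  have hw1 : w - 1 < 0 := sub_neg.mpr hmem.2
  have : (f w - f 1)/(w - 1) < 0 := by rwa [slope_def_field] at hsl
  have hfw : 0 < f w := by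
    have := mul_pos_of_neg_of_neg this hw1
    rw [div_mul_cancel₀ _ (ne_of_lt hw1)] at this
    linarith [hf1, this]
  simpa [hfdef, sub_pos] using hfw

lemma sin_lower (ρ₀ y : ℝ) (hρ0 : 0 < ρ₀) (hρπ : ρ₀ < π/2) (h1 : ρ₀ ≤ y) (h2 : y ≤ π - ρ₀) :
    Real.sin ρ₀ ≤ Real.sin y := by
  have hπ := Real.pi_pos
  rcases le_or_gt y (π/2) with hy | hy
  · apply Real.strictMonoOn_sin.monotoneOn ⟨by linarith, by linarith⟩ ⟨by linarith, hy⟩ h1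
  · rw [← Real.sin_pi_sub y]
    apply Real.strictMonoOn_sin.monotoneOn ⟨by linarith, by linarith⟩ ⟨by linarith, by linarith⟩
      (by linarith)

lemma sin_sq_lower (ρ₀ y : ℝ) (hρ0 : 0 < ρ₀) (hρπ : ρ₀ < π/2) (h1 : ρ₀ ≤ y) (h2 : y ≤ π - ρ₀) :
    Real.sin ρ₀ ^ 2 ≤ Real.sin y ^ 2 := by
  have h := sin_lower ρ₀ y hρ0 hρπ h1 h2
  have h0 : 0 ≤ Real.sin ρ₀ := Real.sin_nonneg_of_nonneg_of_le_pi (by linarith) (by linarith [Real.pi_pos])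
  exact pow_le_pow_left₀ h0 h 2

lemma sin_sq_upper (ρ₀ x : ℝ) (hρ0 : 0 < ρ₀) (hρπ : ρ₀ < π/2) (h1 : -(ρ₀/2) ≤ x) (h2 : x ≤ 0) :
    Real.sin x ^ 2 ≤ Real.sin (ρ₀/2) ^ 2 := by
  have hπ := Real.pi_pos
  have hs0 : 0 ≤ Real.sin (ρ₀/2) := Real.sin_nonneg_of_nonneg_of_le_pi (by linarith) (by linarith)
  have hup : Real.sin x ≤ Real.sin (ρ₀/2) := by
    have : Real.sin x ≤ 0 := Real.sin_nonpos_of_nonpos_of_neg_pi_le h2 (by linarith)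
    linarith
  have hlo : -Real.sin (ρ₀/2) ≤ Real.sin x := by
    rw [← Real.sin_neg]
    apply Real.strictMonoOn_sin.monotoneOn ⟨by linarith, by linarith⟩ ⟨by linarith, by linarith⟩ h1
  nlinarith [hup, hlo]


lemma base_aux (x zz : ℝ) (h0 : 0 ≤ x) (h1 : x ≤ 1) (hz : 0 ≤ zz) : 0 ≤ 1 - x + x*zz := by
  nlinarith

lemma mono_aux1 (x D zz : ℝ) (h1 : x ≤ D) (hz : 1 ≤ zz) : 1 - x + x*zz ≤ 1 - D + D*zz := by
  nlinarith

lemma mono_aux2 (x D ww : ℝ) (hD : D ≤ x) (hw : ww ≤ 1) : 1 - x + x*ww ≤ 1 - D + D*ww := by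
  nlinarith

lemma pos_aux (D zz : ℝ) (hD0 : 0 < D) (hD1 : D < 1) (hz : 0 < zz) : 0 < 1 - D + D*zz := by
  nlinarith

lemma sq_lt_sq_aux (x y : ℝ) (h0 : 0 < x) (h : x < y) : x^2 < y^2 := by nlinarith

lemma sq_lt_one_aux (x : ℝ) (h0 : 0 < x) (h : x < 1) : x^2 < 1 := by nlinarith

lemma mul_le_aux (D : ℝ) (Q : ℝ) (hD : D < 1) (hQ : 0 < Q) : D * Q ≤ Q := by nlinarith

end Stmt7Aux

set_option maxHeartbeats 2000000 in
open Stmt7Aux in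
/-- localization of a trigonometric polynomial near `a` by multiplication
with a fast decreasing polynomial, keeping derivatives at `a` up to order `k`. -/
theorem stmt_7 (E : Set ℝ) (a ρ ρ₀ : ℝ) (k : ℕ) (hk : 0 < k)
    (hEcomp : IsCompact E) (hEsub : E ⊆ Set.Ioo (-π) π)
    (haE : a ∈ E) (hρ : 0 < ρ) (hic : IntervalCondition E a ρ)
    (hρ₀pos : 0 < ρ₀) (hρ₀ : ρ₀ ≤ ρ / 2)
    (hnb : Set.Icc (a - 2 * ρ₀) (a + 2 * ρ₀) ⊆ Set.Ioo (-π) π) :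
    ∃ β ∈ Set.Ioo (0 : ℝ) 1, ∃ C > (0 : ℝ), ∃ n₀ : ℕ, ∀ n : ℕ, n₀ ≤ n →
      ∀ T : ℝ → ℝ, IsTrigPoly n T →
        ∃ m : ℕ, (m : ℝ) ≤ (n : ℝ) + Real.sqrt n ∧ ∃ V : ℝ → ℝ, IsTrigPoly m V ∧
          supNormR V E ≤ supNormR T E ∧
          (∀ t ∈ Set.Icc (a - ρ₀) a,
            |V t - T t| ≤ C * β ^ (Real.sqrt n) * supNormR T E) ∧
          (∀ t ∈ E \ Set.Icc (a - 2 * ρ₀) a,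
            |V t| ≤ C * β ^ (Real.sqrt n) * supNormR T E) ∧
          (∀ j ≤ k, iteratedDeriv j V a = iteratedDeriv j T a) := by
  classical
  obtain ⟨hleft, hright⟩ := hic
  have hπ := Real.pi_pos
  have hmem1 : a - 2*ρ₀ ∈ Set.Icc (a - 2*ρ₀) (a + 2*ρ₀) := by constructor <;> linarith
  have hmem2 : a + 2*ρ₀ ∈ Set.Icc (a - 2*ρ₀) (a + 2*ρ₀) := by constructor <;> linarith
  have ha1 : -π < a - 2*ρ₀ := (hnb hmem1).1
  have ha2 : a + 2*ρ₀ < π := (hnb hmem2).2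
  have hρ₀π : ρ₀ < π/2 := by linarith
  set D₁ := Real.sin (ρ₀/2)^2 with hD₁def
  set D₂ := Real.sin ρ₀^2 with hD₂def
  have hsin1 : 0 < Real.sin (ρ₀/2) := Real.sin_pos_of_pos_of_lt_pi (by linarith) (by linarith)
  have hsin2pos : 0 < Real.sin ρ₀ := Real.sin_pos_of_pos_of_lt_pi (by linarith) (by linarith)
  have hsinlt : Real.sin (ρ₀/2) < Real.sin ρ₀ :=
    Real.strictMonoOn_sin ⟨by linarith, by linarith⟩ ⟨by linarith, by linarith⟩ (by linarith)
  have hsin2lt1 : Real.sin ρ₀ < 1 := by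
    have h := Real.strictMonoOn_sin (Set.mem_Icc.mpr ⟨by linarith, by linarith⟩)
      (Set.mem_Icc.mpr ⟨by linarith, le_rfl⟩) hρ₀π
    rwa [Real.sin_pi_div_two] at h
  have hD₁pos : 0 < D₁ := by rw [hD₁def]; positivity
  have hD₁₂ : D₁ < D₂ := by rw [hD₁def, hD₂def]; exact sq_lt_sq_aux _ _ hsin1 hsinlt
  have hD₂pos : 0 < D₂ := lt_trans hD₁pos hD₁₂
  have hD₂lt1 : D₂ < 1 := by rw [hD₂def]; exact sq_lt_one_aux _ hsin2pos hsin2lt1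
  obtain ⟨q, hq1, hq2⟩ := exists_rat_btwn hD₁₂
  set Q := q.den with hQdef
  set P := q.num.toNat with hPdef
  have hq0 : (0:ℚ) < q := by
    have h : (0:ℝ) < (q:ℝ) := lt_trans hD₁pos hq1
    exact_mod_cast h
  have hQ0 : 0 < Q := q.pos
  have hnum : (0:ℤ) < q.num := Rat.num_pos.mpr hq0
  have hP0 : 0 < P := by rw [hPdef]; omega
  have hnumcast : ((q.num : ℝ)) = (P:ℝ) := by
    rw [hPdef]
    exact_mod_cast (Int.toNat_of_nonneg hnum.le).symm
  have hcast : (q:ℝ) = (P:ℝ)/(Q:ℝ) := by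
    rw [Rat.cast_def, hnumcast, hQdef]
  have hQR : (0:ℝ) < (Q:ℝ) := by exact_mod_cast hQ0
  have hc1 : D₁ * Q < P := by
    have h := hq1
    rw [hcast] at h
    exact (lt_div_iff₀ hQR).mp h
  have hc2 : (P:ℝ) < D₂ * Q := by
    have h := hq2
    rw [hcast] at h
    exact (div_lt_iff₀ hQR).mp h
  have hPQ : P < Q := by
    have h : (P:ℝ) < (Q:ℝ) := lt_of_lt_of_le hc2 (mul_le_aux _ _ hD₂lt1 hQR)
    exact_mod_cast h
  obtain ⟨z, hz1, hz2⟩ := exists_zeta hD₁pos hc1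
  obtain ⟨w, hw0, hw1, hw2⟩ := exists_omega hD₂pos hc2
  have hz0 : (0:ℝ) < z := lt_trans one_pos hz1
  have hb1 : (0:ℝ) < 1 - D₁ + D₁*z := pos_aux _ _ hD₁pos (lt_trans hD₁₂ hD₂lt1) hz0
  have hb2 : (0:ℝ) < 1 - D₂ + D₂*w := pos_aux _ _ hD₂pos hD₂lt1 hw0
  set κ₁ := (1 - D₁ + D₁*z)^Q / z^P with hκ₁def
  set κ₂ := (1 - D₂ + D₂*w)^Q / w^P with hκ₂def
  have hκ₁pos : 0 < κ₁ := by rw [hκ₁def]; positivity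
  have hκ₂pos : 0 < κ₂ := by rw [hκ₂def]; positivity
  have hκ₁lt1 : κ₁ < 1 := (div_lt_one (pow_pos hz0 P)).mpr hz2
  have hκ₂lt1 : κ₂ < 1 := (div_lt_one (pow_pos hw0 P)).mpr hw2
  set κ := max κ₁ κ₂ with hκdef
  have hκpos : 0 < κ := lt_of_lt_of_le hκ₁pos (le_max_left _ _)
  have hκlt1 : κ < 1 := max_lt hκ₁lt1 hκ₂lt1
  refine ⟨κ ^ ((Q:ℝ)⁻¹), ⟨Real.rpow_pos_of_pos hκpos _,
    Real.rpow_lt_one hκpos.le hκlt1 (by positivity)⟩, (κ^2)⁻¹, by positivity,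
    (Q*(k+2))^2, ?_⟩
  intro n hn T hT
  set M := Nat.sqrt n / Q with hMdef
  have hsqrtmono : Q*(k+2) ≤ Nat.sqrt n := by
    have h1 : Nat.sqrt ((Q*(k+2))^2) = Q*(k+2) := by
      rw [pow_two]; exact Nat.sqrt_eq _
    calc Q*(k+2) = Nat.sqrt ((Q*(k+2))^2) := h1.symm
      _ ≤ Nat.sqrt n := Nat.sqrt_le_sqrt hn
  have hMk : k + 2 ≤ M := by
    rw [hMdef]
    calc k+2 = Q*(k+2)/Q := (Nat.mul_div_cancel_left _ hQ0).symm
      _ ≤ Nat.sqrt n / Q := Nat.div_le_div_right hsqrtmono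
  have hM0 : 0 < M := by omega
  set N := Q * M with hNdef
  set s := P * M with hsdef
  have hsN : s ≤ N := by
    rw [hsdef, hNdef]
    exact Nat.mul_le_mul_right M (le_of_lt hPQ)
  have hMs : M ≤ s := by
    rw [hsdef]
    exact Nat.le_mul_of_pos_left M hP0
  have hNsqrt : (N:ℝ) ≤ Real.sqrt n := by
    have h1 : N ≤ Nat.sqrt n := by rw [hNdef, hMdef]; exact Nat.mul_div_le _ _
    calc (N:ℝ) ≤ (Nat.sqrt n : ℝ) := by exact_mod_cast h1
      _ ≤ Real.sqrt n := Real.nat_sqrt_le_real_sqrt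
  have hMreal : Real.sqrt n * (Q:ℝ)⁻¹ - 2 ≤ (M:ℝ) := by
    have h2 : Nat.sqrt n < Q*M + Q := by
      have hQM : Q * M + Nat.sqrt n % Q = Nat.sqrt n := by
        rw [hMdef]; exact Nat.div_add_mod _ _
      calc Nat.sqrt n = Q*M + Nat.sqrt n % Q := hQM.symm
        _ < Q*M + Q := Nat.add_lt_add_left (Nat.mod_lt _ hQ0) _
    have h3 : Real.sqrt n < (Nat.sqrt n : ℝ) + 1 := by
      rw [Real.sqrt_lt' (by positivity)]
      have h := Nat.lt_succ_sqrt' n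
      calc (n:ℝ) < (((Nat.sqrt n + 1)^2 : ℕ) : ℝ) := by exact_mod_cast h
        _ = ((Nat.sqrt n : ℝ) + 1)^2 := by push_cast; ring
    have hA : Nat.sqrt n + 1 ≤ Q*M + Q := h2
    have h4 : ((Nat.sqrt n : ℝ)) + 1 ≤ (Q:ℝ)*((M:ℝ)+2) := by
      calc ((Nat.sqrt n : ℝ)) + 1 = ((Nat.sqrt n + 1 : ℕ) : ℝ) := by push_cast; ring
        _ ≤ ((Q*M + Q : ℕ) : ℝ) := by exact_mod_cast hA
        _ ≤ (Q:ℝ)*((M:ℝ)+2) := by push_cast; linarith only [hQR]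
    have h5 : Real.sqrt n ≤ (Q:ℝ)*((M:ℝ)+2) := by linarith only [h3, h4]
    rw [sub_le_iff_le_add]
    calc Real.sqrt n * (Q:ℝ)⁻¹ ≤ ((Q:ℝ)*((M:ℝ)+2)) * (Q:ℝ)⁻¹ :=
          mul_le_mul_of_nonneg_right h5 (by positivity)
      _ = (M:ℝ)+2 := by field_simp
  have hfin : κ^M ≤ (κ^2)⁻¹ * (κ ^ ((Q:ℝ)⁻¹)) ^ (Real.sqrt n) := by
    have e1 : κ^M = κ ^ ((M:ℕ):ℝ) := (Real.rpow_natCast κ M).symm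
    have e2 : κ ^ ((M:ℝ)) ≥ κ ^ (Real.sqrt n * (Q:ℝ)⁻¹ - 2) → True := fun _ => trivial
    have e2' : κ ^ ((M:ℝ)) ≤ κ ^ (Real.sqrt n * (Q:ℝ)⁻¹ - 2) :=
      Real.rpow_le_rpow_of_exponent_ge hκpos hκlt1.le hMreal
    have e3 : κ ^ (Real.sqrt n * (Q:ℝ)⁻¹ - 2) = (κ^2)⁻¹ * (κ ^ ((Q:ℝ)⁻¹)) ^ (Real.sqrt n) := by
      rw [Real.rpow_sub hκpos, mul_comm (Real.sqrt n), Real.rpow_mul hκpos.le]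
      rw [show (2:ℝ) = ((2:ℕ):ℝ) by norm_num, Real.rpow_natCast]
      rw [div_eq_mul_inv, mul_comm]
    rw [e1]
    calc κ ^ ((M:ℕ):ℝ) ≤ κ ^ (Real.sqrt n * (Q:ℝ)⁻¹ - 2) := e2'
      _ = _ := e3
  have hTc : Continuous T := (tp_contDiff hT).continuous
  have hsup0 : 0 ≤ supNormR T E := supNormR_nonneg T E
  have hle : ∀ x ∈ E, |T x| ≤ supNormR T E := fun x hx => le_supNormR hTc hEcomp hx
  set dd : ℝ → ℝ := fun t => Real.sin ((t - a)/2)^2 with hdd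
  set ee : ℝ → ℝ := fun t => Real.cos ((t - a)/2)^2 with hee
  set G : ℝ → ℝ := fun t => ∑ j ∈ Finset.Icc s N, (N.choose j : ℝ) * dd t ^ j * ee t ^ (N-j)
    with hGdef
  set V : ℝ → ℝ := fun t => T t - G t * T t with hVdef
  have hd0 : ∀ t, 0 ≤ dd t := fun t => by rw [hdd]; exact sq_nonneg _
  have hd1 : ∀ t, dd t ≤ 1 := fun t => by rw [hdd]; exact Real.sin_sq_le_one _
  have hde : ∀ t, ee t = 1 - dd t := fun t => by rw [hdd, hee]; exact Real.cos_sq' _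
  have hGeq : ∀ t, G t = ∑ j ∈ Finset.Icc s N, (N.choose j : ℝ) * dd t ^ j * (1 - dd t)^(N-j) := by
    intro t
    rw [hGdef]
    exact Finset.sum_congr rfl fun j _ => by rw [hde t]
  have hG0 : ∀ t, 0 ≤ G t := by
    intro t
    rw [hGeq t]
    apply Finset.sum_nonneg
    intro j _
    have h1 := hd0 t
    have h2 := hd1 t
    have h3 : 0 ≤ 1 - dd t := by linarith
    positivity
  have hG1 : ∀ t, G t ≤ 1 := by
    intro t
    rw [hGeq t]
    have h1 := hd0 t
    have h2 := hd1 t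
    have h3 : 0 ≤ 1 - dd t := by linarith
    calc (∑ j ∈ Finset.Icc s N, (N.choose j : ℝ) * dd t ^ j * (1 - dd t)^(N-j))
        ≤ ∑ j ∈ Finset.range (N+1), (N.choose j : ℝ) * dd t ^ j * (1 - dd t)^(N-j) := by
          apply Finset.sum_le_sum_of_subset_of_nonneg
          · intro j hj
            exact Finset.mem_range.2 (Nat.lt_succ_of_le (Finset.mem_Icc.mp hj).2)
          · intro j _ _
            positivity
      _ = 1 := binom_sum_eq (dd t) N
  have hhead : ∀ t, 1 - G t
      = ∑ j ∈ Finset.range s, (N.choose j:ℝ) * dd t ^ j * (1 - dd t)^(N-j) := by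
    intro t
    have hsplit := Finset.sum_range_add_sum_Ico
      (fun j => (N.choose j:ℝ) * dd t ^ j * (1 - dd t)^(N-j)) (show s ≤ N+1 by omega)
    rw [Finset.Ico_add_one_right_eq_Icc] at hsplit
    have hbs := binom_sum_eq (dd t) N
    rw [hGeq t]
    linarith [hsplit, hbs]
  have htail_small : ∀ t, dd t ≤ D₁ → G t ≤ κ^M := by
    intro t hdt
    have h1 := tail_bound (dd t) z (hd0 t) (hd1 t) hz1.le s N
    have h2 : (1 - dd t + dd t * z)^N ≤ (1 - D₁ + D₁*z)^N := by
      exact pow_le_pow_left₀ (base_aux _ _ (hd0 t) (hd1 t) (le_trans zero_le_one hz1.le)) (mono_aux1 _ _ _ hdt hz1.le) N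
    have h3 : (1 - D₁ + D₁*z)^N / z^s = κ₁^M := by
      rw [hNdef, hsdef, pow_mul, pow_mul, ← div_pow, hκ₁def]
    have h4 : κ₁^M ≤ κ^M := pow_le_pow_left₀ hκ₁pos.le (le_max_left _ _) M
    have h5 : (1 - dd t + dd t * z)^N / z^s ≤ (1 - D₁ + D₁*z)^N / z^s := by
      rw [div_eq_mul_inv, div_eq_mul_inv]
      exact mul_le_mul_of_nonneg_right h2 (by positivity)
    rw [hGeq t]
    linarith [h1, h5, h3, h4]
  have hhead_small : ∀ t, D₂ ≤ dd t → 1 - G t ≤ κ^M := by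
    intro t hdt
    have h1 := head_bound (dd t) w (hd0 t) (hd1 t) hw0 hw1.le s N (by omega)
    have hbase : (0:ℝ) ≤ 1 - dd t + dd t * w := base_aux _ _ (hd0 t) (hd1 t) hw0.le
    have h2 : (1 - dd t + dd t * w)^N ≤ (1 - D₂ + D₂*w)^N :=
      pow_le_pow_left₀ hbase (mono_aux2 _ _ _ hdt hw1.le) N
    have h3 : (1 - D₂ + D₂*w)^N / w^s = κ₂^M := by
      rw [hNdef, hsdef, pow_mul, pow_mul, ← div_pow, hκ₂def]
    have h4 : κ₂^M ≤ κ^M := pow_le_pow_left₀ hκ₂pos.le (le_max_right _ _) M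
    have h5 : (1 - dd t + dd t * w)^N / w^s ≤ (1 - D₂ + D₂*w)^N / w^s := by
      rw [div_eq_mul_inv, div_eq_mul_inv]
      exact mul_le_mul_of_nonneg_right h2 (by positivity)
    rw [hhead t]
    linarith [h1, h5, h3, h4]
  have hplateau : ∀ t ∈ Set.Icc (a-ρ₀) a, dd t ≤ D₁ := by
    intro t ht
    obtain ⟨ht1, ht2⟩ := ht
    rw [hdd, hD₁def]
    exact sin_sq_upper ρ₀ ((t-a)/2) hρ₀pos hρ₀π (by linarith) (by linarith)
  have hfar : ∀ t ∈ E \ Set.Icc (a - 2*ρ₀) a, D₂ ≤ dd t := by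
    rintro t ⟨htE, htn⟩
    obtain ⟨htl, htr⟩ := hEsub htE
    rw [Set.mem_Icc] at htn
    push_neg at htn
    rcases le_or_gt t a with hta | hta
    · have htlt : t < a - 2*ρ₀ := by
        by_contra hcon
        push_neg at hcon
        exact absurd hta (not_le.mpr (htn hcon))
      have hy1 : ρ₀ ≤ (a-t)/2 := by linarith
      have hy2 : (a-t)/2 ≤ π - ρ₀ := by linarith
      have hsq : Real.sin ρ₀^2 ≤ Real.sin ((a-t)/2)^2 :=
        sin_sq_lower ρ₀ _ hρ₀pos hρ₀π hy1 hy2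
      have heq : Real.sin ((t-a)/2)^2 = Real.sin ((a-t)/2)^2 := by
        rw [show (t-a)/2 = -((a-t)/2) by ring, Real.sin_neg]
        ring
      simp only [hdd, hD₂def]
      rw [heq]
      exact hsq
    · have hge : a + 2*ρ ≤ t := by
        by_contra hcon
        push_neg at hcon
        have hmem : t ∈ Set.Ioo a (a + 2*ρ) ∩ E := ⟨⟨hta, hcon⟩, htE⟩
        rw [hright] at hmem
        exact hmem
      have hy1 : ρ₀ ≤ (t-a)/2 := by linarith
      have hy2 : (t-a)/2 ≤ π - ρ₀ := by linarith
      rw [hdd, hD₂def]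
      exact sin_sq_lower ρ₀ _ hρ₀pos hρ₀π hy1 hy2
  have hVtp : IsTrigPoly (n + N) V := by
    have hsum : IsTrigPoly (n + N) (fun t => ∑ j ∈ Finset.Icc s N,
        (N.choose j:ℝ) * ((Real.sin ((t-a)/2)^2)^j * ((Real.cos ((t-a)/2)^2)^(N-j) * T t))) :=
      tp_sum _ _ (fun j hj => tp_term a hT N j (Finset.mem_Icc.mp hj).2 _)
    have hT' : IsTrigPoly (n+N) T := tp_mono (Nat.le_add_right n N) hT
    have h := tp_add hT' (tp_smul (-1) hsum)
    refine tp_congr (fun t => ?_) h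
    have hs2 : (∑ j ∈ Finset.Icc s N,
        (N.choose j:ℝ) * ((Real.sin ((t-a)/2)^2)^j * ((Real.cos ((t-a)/2)^2)^(N-j) * T t)))
        = G t * T t := by
      rw [hGdef, hdd, hee]
      rw [Finset.sum_mul]
      exact Finset.sum_congr rfl fun j _ => by ring
    rw [hVdef]
    rw [hs2]
    ring
  have hVE : ∀ x ∈ E, |V x| ≤ supNormR T E := by
    intro x hx
    have h1 : |V x| ≤ |T x| := by
      have hvx : V x = (1 - G x) * T x := by rw [hVdef]; ring
      rw [hvx, abs_mul]
      have h2 : |1 - G x| ≤ 1 := by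
        rw [abs_le]
        constructor
        · linarith [hG1 x]
        · linarith [hG0 x]
      exact mul_le_of_le_one_left (abs_nonneg _) h2
    exact le_trans h1 (hle x hx)
  have hHsm : ContDiff ℝ (⊤:ℕ∞) (fun t => ∑ j ∈ Finset.Icc s N,
      (N.choose j:ℝ) * Real.sin ((t-a)/2)^(2*(j-s)) * Real.cos ((t-a)/2)^(2*(N-j)) * T t) := by
    apply ContDiff.sum
    intro j _
    exact ((contDiff_const.mul ((contDiff_sin_shift a).pow _)).mul
      ((contDiff_cos_shift a).pow _)).mul (tp_contDiff hT)
  have hGTsm : ContDiff ℝ (⊤:ℕ∞) (fun t => G t * T t) := by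
    rw [hGdef, hdd, hee]
    apply ContDiff.mul _ (tp_contDiff hT)
    apply ContDiff.sum
    intro j _
    exact (contDiff_const.mul (((contDiff_sin_shift a).pow 2).pow _)).mul
      (((contDiff_cos_shift a).pow 2).pow _)
  have hkey : (fun t => G t * T t) = (fun t => Real.sin ((t-a)/2)^(2*s) *
      (∑ j ∈ Finset.Icc s N,
        (N.choose j:ℝ) * Real.sin ((t-a)/2)^(2*(j-s)) * Real.cos ((t-a)/2)^(2*(N-j)) * T t)) := by
    funext t
    rw [hGdef, hdd, hee]
    rw [Finset.sum_mul, Finset.mul_sum]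
    apply Finset.sum_congr rfl
    intro j hj
    obtain ⟨hj1, hj2⟩ := Finset.mem_Icc.mp hj
    rw [← pow_mul, ← pow_mul]
    rw [show 2*j = 2*s + 2*(j-s) by omega, pow_add]
    ring
  have hiv : ∀ j ≤ k, iteratedDeriv j V a = iteratedDeriv j T a := by
    intro j hj
    have hsub := iteratedDeriv_sub' j T (fun t => G t * T t) (tp_contDiff hT) hGTsm
    have h0 : iteratedDeriv j (fun t => G t * T t) a = 0 := by
      rw [hkey]
      exact van a j (2*s) _ hHsm (by omega)
    calc iteratedDeriv j V a = iteratedDeriv j (fun t => T t - G t * T t) a := by rw [hVdef]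
      _ = iteratedDeriv j T a - iteratedDeriv j (fun t => G t * T t) a := congrFun hsub a
      _ = iteratedDeriv j T a := by rw [h0, sub_zero]
  refine ⟨n + N, ?_, V, hVtp, supNormR_le hVE hsup0, ?_, ?_, hiv⟩
  · push_cast
    linarith [hNsqrt]
  · intro t ht
    have htE : t ∈ E := hleft ⟨by linarith [ht.1], ht.2⟩
    have h1 : |V t - T t| = G t * |T t| := by
      rw [hVdef]
      rw [show T t - G t * T t - T t = -(G t * T t) by ring, abs_neg, abs_mul,
        abs_of_nonneg (hG0 t)]
    have h2 : G t ≤ κ^M := htail_small t (hplateau t ht)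
    calc |V t - T t| = G t * |T t| := h1
      _ ≤ κ^M * supNormR T E := mul_le_mul h2 (hle t htE) (abs_nonneg _) (by positivity)
      _ ≤ (κ^2)⁻¹ * (κ ^ ((Q:ℝ)⁻¹)) ^ (Real.sqrt n) * supNormR T E :=
          mul_le_mul_of_nonneg_right hfin hsup0
  · intro t ht
    have h2 : 1 - G t ≤ κ^M := hhead_small t (hfar t ht)
    have h1 : |V t| = (1 - G t) * |T t| := by
      have hv : V t = (1 - G t) * T t := by rw [hVdef]; ring
      rw [hv, abs_mul, abs_of_nonneg (by linarith [hG1 t])]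
    calc |V t| = (1 - G t) * |T t| := h1
      _ ≤ κ^M * supNormR T E := mul_le_mul h2 (hle t ht.1) (abs_nonneg _) (by positivity)
      _ ≤ (κ^2)⁻¹ * (κ ^ ((Q:ℝ)⁻¹)) ^ (Real.sqrt n) * supNormR T E :=
          mul_le_mul_of_nonneg_right hfin hsup0
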